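/- Let n ≥ 1 and let ψ : ℕ → ℝ₊ be any function with Σ_{k=1}^∞ k^{n−1} ψ(k) < ∞. Then the set W_n(ψ) of x ∈ ℝ^n for which there exist infinitely many a ∈ ℤ^n \ {0} such that |a₀ + a·x| < ψ(‖a‖) for some a₀ ∈ ℤ has Lebesgue measure zero. -/

import Mathlib

open scoped BigOperators

open MeasureTheory Set Filter
open scoped ENNReal

lemma sum_split {n : ℕ} (i : Fin n) (f : Fin n → ℝ) :
    ∑ j, f j = f i + ∑ j : {j : Fin n // j ≠ i}, f j := by
  rw [← Finset.add_sum_erase _ f (Finset.mem_univ i)]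
  congr 1
  exact Finset.sum_subtype _ (fun x => ⟨fun h => (Finset.mem_erase.mp h).1,
    fun h => Finset.mem_erase.mpr ⟨h, Finset.mem_univ x⟩⟩) f

lemma slab_measure {n : ℕ} (a : Fin n → ℤ) (i : Fin n) (hi : a i ≠ 0)
    (c ε M : ℝ) (hM : 0 ≤ M) :
    volume {x : Fin n → ℝ | (∀ j, x j ∈ Set.Icc (-M) M) ∧ |c + ∑ j, (a j : ℝ) * x j| < ε}
      ≤ ENNReal.ofReal ((2*M)^(n-1)) * ENNReal.ofReal (2 * (ε / |(a i : ℝ)|)) := by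
  set S : Set (Fin n → ℝ) :=
    {x : Fin n → ℝ | (∀ j, x j ∈ Set.Icc (-M) M) ∧ |c + ∑ j, (a j : ℝ) * x j| < ε} with hS
  have hSm : MeasurableSet S := by
    have h1 : MeasurableSet {x : Fin n → ℝ | ∀ j, x j ∈ Set.Icc (-M) M} := by
      have : {x : Fin n → ℝ | ∀ j, x j ∈ Set.Icc (-M) M}
          = Set.univ.pi fun _ : Fin n => Set.Icc (-M) M := by
        ext x
        simp only [Set.mem_univ_pi, Set.mem_setOf_eq]
      rw [this]
      exact MeasurableSet.univ_pi fun _ => measurableSet_Icc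
    have h2 : MeasurableSet {x : Fin n → ℝ | |c + ∑ j, (a j : ℝ) * x j| < ε} := by
      have hcont : Continuous fun x : Fin n → ℝ => |c + ∑ j, (a j : ℝ) * x j| := by
        fun_prop
      exact measurableSet_lt hcont.measurable measurable_const
    exact h1.inter h2
  set e := MeasurableEquiv.piEquivPiSubtypeProd (fun _ : Fin n => ℝ) (fun j => j ≠ i) with he
  have hmp := (measurePreserving_piEquivPiSubtypeProd (fun _ : Fin n => (volume : Measure ℝ))
    (fun j => j ≠ i)).symm
  have hvol := hmp.measure_preimage (hSm.nullMeasurableSet)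
  rw [MeasureTheory.volume_pi, ← hvol]
  have hSm' : MeasurableSet (e.symm ⁻¹' S) := e.symm.measurable hSm
  rw [Measure.prod_apply hSm']
  -- the fiber bound
  haveI : Unique {j : Fin n // ¬ j ≠ i} := by
    refine ⟨⟨⟨i, by simp⟩⟩, ?_⟩
    rintro ⟨j, hj⟩
    simp only [ne_eq, not_not] at hj
    subst hj; rfl
  set Box : Set ({j : Fin n // j ≠ i} → ℝ) := Set.univ.pi fun _ => Set.Icc (-M) M with hBox
  have hBoxm : MeasurableSet Box := MeasurableSet.univ_pi fun _ => measurableSet_Icc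
  have key : ∀ w : {j : Fin n // j ≠ i} → ℝ,
      (Measure.pi fun _ : {j : Fin n // ¬ j ≠ i} => (volume : Measure ℝ))
        (Prod.mk w ⁻¹' (e.symm ⁻¹' S))
      ≤ Box.indicator (fun _ => ENNReal.ofReal (2 * (ε / |(a i : ℝ)|))) w := by
    intro w
    by_cases hw : w ∈ Box
    · rw [Set.indicator_of_mem hw]
      set R : ℝ := ∑ j : {j : Fin n // j ≠ i}, (a j : ℝ) * w j with hR
      have hsub : Prod.mk w ⁻¹' (e.symm ⁻¹' S) ⊆
          Set.univ.pi (fun _ : {j : Fin n // ¬ j ≠ i} =>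
            Metric.ball (-(c + R) / (a i : ℝ)) (ε / |(a i : ℝ)|)) := by
        intro u hu
        simp only [Set.mem_preimage] at hu ⊢
        obtain ⟨hbox, habs⟩ := hu
        set x := e.symm (w, u) with hx
        have hEq : ∀ j : Fin n, x j
            = (Equiv.piEquivPiSubtypeProd (fun j : Fin n => j ≠ i) (fun _ => ℝ)).symm (w, u) j :=
          fun _ => rfl
        have hxi : x i = u default := by
          rw [hEq i, Equiv.piEquivPiSubtypeProd_symm_apply, dif_neg (by simp)]
          exact congrArg u (Subsingleton.elim _ _)
        have hxj : ∀ j : {j : Fin n // j ≠ i}, x (j : Fin n) = w j := by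
          rintro ⟨j, hj⟩
          rw [hEq j, Equiv.piEquivPiSubtypeProd_symm_apply, dif_pos hj]
        have hsum : ∑ j, (a j : ℝ) * x j = (a i : ℝ) * u default + R := by
          rw [sum_split i (fun j => (a j : ℝ) * x j), hxi]
          congr 1
          apply Finset.sum_congr rfl
          intro j _
          rw [hxj j]
        have hai : (0:ℝ) < |(a i : ℝ)| := by
          simp only [abs_pos, ne_eq, Int.cast_eq_zero]
          exact hi
        have hane : (a i : ℝ) ≠ 0 := by exact_mod_cast hi
        intro j _
        have hj : u j = u default := congrArg u (Subsingleton.elim _ _)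
        rw [Metric.mem_ball, hj, Real.dist_eq]
        have hdiff : u default - (-(c + R) / (a i : ℝ))
            = (c + ((a i : ℝ) * u default + R)) / (a i : ℝ) := by
          field_simp
          ring
        rw [hdiff, abs_div]
        rw [hsum] at habs
        exact (div_lt_div_iff_of_pos_right hai).mpr habs
      calc (Measure.pi fun _ : {j : Fin n // ¬ j ≠ i} => (volume : Measure ℝ))
            (Prod.mk w ⁻¹' (e.symm ⁻¹' S))
          ≤ (Measure.pi fun _ : {j : Fin n // ¬ j ≠ i} => (volume : Measure ℝ))
            (Set.univ.pi (fun _ : {j : Fin n // ¬ j ≠ i} =>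
              Metric.ball (-(c + R) / (a i : ℝ)) (ε / |(a i : ℝ)|))) := measure_mono hsub
        _ = ∏ _j : {j : Fin n // ¬ j ≠ i},
              volume (Metric.ball (-(c + R) / (a i : ℝ)) (ε / |(a i : ℝ)|)) :=
            Measure.pi_pi _ _
        _ = volume (Metric.ball (-(c + R) / (a i : ℝ)) (ε / |(a i : ℝ)|)) := by
            rw [Finset.prod_const, Finset.card_univ,
              Fintype.card_eq_one_iff.mpr ⟨default, fun y => Subsingleton.elim y _⟩, pow_one]
        _ = ENNReal.ofReal (2 * (ε / |(a i : ℝ)|)) := Real.volume_ball _ _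
    · rw [Set.indicator_of_notMem hw]
      have : Prod.mk w ⁻¹' (e.symm ⁻¹' S) = ∅ := by
        rw [Set.eq_empty_iff_forall_notMem]
        intro u hu
        obtain ⟨hbox, -⟩ := hu
        apply hw
        intro j _
        have : e.symm (w, u) (j : Fin n) = w j := by
          obtain ⟨j, hj⟩ := j
          show (Equiv.piEquivPiSubtypeProd (fun j : Fin n => j ≠ i) (fun _ => ℝ)).symm (w, u) j = _
          rw [Equiv.piEquivPiSubtypeProd_symm_apply, dif_pos hj]
        rw [← this]
        exact hbox (j : Fin n)
      rw [this]
      simp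
  calc ∫⁻ w, (Measure.pi fun _ : {j : Fin n // ¬ j ≠ i} => (volume : Measure ℝ))
        (Prod.mk w ⁻¹' (e.symm ⁻¹' S)) ∂(Measure.pi fun _ : {j : Fin n // j ≠ i} => volume)
      ≤ ∫⁻ w, Box.indicator (fun _ => ENNReal.ofReal (2 * (ε / |(a i : ℝ)|))) w
          ∂(Measure.pi fun _ : {j : Fin n // j ≠ i} => volume) := lintegral_mono key
    _ = (Measure.pi fun _ : {j : Fin n // j ≠ i} => (volume : Measure ℝ)) Box *
          ENNReal.ofReal (2 * (ε / |(a i : ℝ)|)) := by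
        rw [lintegral_indicator_const hBoxm, mul_comm]
    _ ≤ ENNReal.ofReal ((2*M)^(n-1)) * ENNReal.ofReal (2 * (ε / |(a i : ℝ)|)) := by
        gcongr
        rw [hBox, Measure.pi_pi]
        simp only [Real.volume_Icc]
        rw [Finset.prod_const, Finset.card_univ]
        have hcard : Fintype.card {j : Fin n // j ≠ i} = n - 1 := by
          simp [Fintype.card_subtype_compl]
        rw [hcard]
        rw [← ENNReal.ofReal_pow (by linarith)]
        apply le_of_eq
        congr 1
        ring_nf

lemma cell_measure {n : ℕ} (hn : 1 ≤ n) (a : Fin n → ℤ) (ha : a ≠ 0) (ε M B : ℝ)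
    (hε : 0 < ε) (hεB : ε ≤ B) (hM : 1 ≤ M) :
    volume {x : Fin n → ℝ | (∀ j, x j ∈ Set.Icc (-M) M) ∧ ∃ a₀ : ℤ,
        |(a₀ : ℝ) + ∑ j, (a j : ℝ) * x j| < ε}
      ≤ ENNReal.ofReal ((2*B + 2*n*M + 3) * (2*M)^(n-1) * (2 * ε)) := by
  classical
  set k : ℕ := Finset.univ.sup fun j => (a j).natAbs with hk
  have hne : (Finset.univ : Finset (Fin n)).Nonempty := by
    haveI : NeZero n := ⟨by omega⟩
    exact Finset.univ_nonempty
  obtain ⟨i, -, hik⟩ := Finset.exists_mem_eq_sup Finset.univ hne fun j => (a j).natAbs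
  have hk1 : 1 ≤ k := by
    rcases Function.ne_iff.mp ha with ⟨j, hj⟩
    have h1 : 1 ≤ (a j).natAbs := by
      simp only [Pi.zero_apply] at hj
      omega
    exact le_trans h1 (Finset.le_sup (f := fun j => (a j).natAbs) (Finset.mem_univ j))
  have hikk : (a i).natAbs = k := hik.symm
  have hai : a i ≠ 0 := by
    intro h; rw [h] at hikk; simp at hikk; omega
  have haik : |(a i : ℝ)| = (k : ℝ) := by
    rw [← Int.cast_abs, Int.abs_eq_natAbs, hikk]
    simp
  set K : ℤ := ⌈ε + n * M * k⌉ with hK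
  have hM0 : (0:ℝ) ≤ M := by linarith
  have hnMk : (0:ℝ) ≤ (n:ℝ) * M * (k:ℝ) :=
    mul_nonneg (mul_nonneg (Nat.cast_nonneg n) hM0) (Nat.cast_nonneg k)
  have hKpos : 0 < K := Int.ceil_pos.mpr (by linarith)
  have hcover : {x : Fin n → ℝ | (∀ j, x j ∈ Set.Icc (-M) M) ∧ ∃ a₀ : ℤ,
        |(a₀ : ℝ) + ∑ j, (a j : ℝ) * x j| < ε}
      ⊆ ⋃ a₀ ∈ Finset.Icc (-K) K,
          {x : Fin n → ℝ | (∀ j, x j ∈ Set.Icc (-M) M) ∧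
            |(a₀ : ℝ) + ∑ j, (a j : ℝ) * x j| < ε} := by
    rintro x ⟨hbox, a₀, habs⟩
    have hxM : ∀ j, |x j| ≤ M := fun j => abs_le.mpr ⟨(hbox j).1, (hbox j).2⟩
    have hsb : |∑ j, (a j : ℝ) * x j| ≤ (n:ℝ) * M * (k:ℝ) := by
      calc |∑ j, (a j : ℝ) * x j| ≤ ∑ j, |(a j : ℝ) * x j| := Finset.abs_sum_le_sum_abs _ _
        _ ≤ ∑ _j : Fin n, (k:ℝ) * M := by
            apply Finset.sum_le_sum
            intro j _
            rw [abs_mul]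
            have h1 : |(a j : ℝ)| ≤ (k:ℝ) := by
              rw [← Int.cast_abs, Int.abs_eq_natAbs]
              have := Finset.le_sup (f := fun j => (a j).natAbs) (Finset.mem_univ j)
              rw [← hk] at this
              exact_mod_cast this
            exact mul_le_mul h1 (hxM j) (abs_nonneg _) (Nat.cast_nonneg k)
        _ = (n:ℝ) * ((k:ℝ) * M) := by rw [Finset.sum_const, Finset.card_univ,
              Fintype.card_fin, nsmul_eq_mul]
        _ = (n:ℝ) * M * (k:ℝ) := by ring
    have ha₀ : a₀ ∈ Finset.Icc (-K) K := by
      rw [Finset.mem_Icc]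
      have h2 : |(a₀ : ℝ)| ≤ ε + (n:ℝ) * M * (k:ℝ) := by
        calc |(a₀ : ℝ)| ≤ |(a₀ : ℝ) + ∑ j, (a j : ℝ) * x j| + |∑ j, (a j : ℝ) * x j| := by
              have := abs_add_le ((a₀:ℝ) + ∑ j, (a j : ℝ) * x j) (-(∑ j, (a j : ℝ) * x j))
              simpa [abs_neg] using this
          _ ≤ ε + (n:ℝ) * M * (k:ℝ) := by
              have := le_of_lt habs
              linarith
      have h3 : |(a₀ : ℝ)| ≤ (K : ℝ) := le_trans h2 (Int.le_ceil _)
      have h4 : |a₀| ≤ K := by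
        rwa [← Int.cast_abs, Int.cast_le] at h3
      constructor
      · exact neg_le_of_abs_le h4
      · exact le_of_abs_le h4
    exact Set.mem_biUnion ha₀ ⟨hbox, habs⟩
  calc volume {x : Fin n → ℝ | (∀ j, x j ∈ Set.Icc (-M) M) ∧ ∃ a₀ : ℤ,
        |(a₀ : ℝ) + ∑ j, (a j : ℝ) * x j| < ε}
      ≤ ∑ a₀ ∈ Finset.Icc (-K) K, volume {x : Fin n → ℝ | (∀ j, x j ∈ Set.Icc (-M) M) ∧
          |((a₀:ℤ) : ℝ) + ∑ j, (a j : ℝ) * x j| < ε} :=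
        le_trans (measure_mono hcover) (measure_biUnion_finset_le _ _)
    _ ≤ ∑ _a₀ ∈ Finset.Icc (-K) K,
          ENNReal.ofReal ((2*M)^(n-1)) * ENNReal.ofReal (2 * (ε / |(a i : ℝ)|)) := by
        apply Finset.sum_le_sum
        intro a₀ _
        exact slab_measure a i hai _ ε M hM0
    _ = ((2*K+1).toNat : ℝ≥0∞) * (ENNReal.ofReal ((2*M)^(n-1)) *
          ENNReal.ofReal (2 * (ε / |(a i : ℝ)|))) := by
        rw [Finset.sum_const, nsmul_eq_mul]
        congr 2
        rw [Int.card_Icc]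
        congr 1
        omega
    _ ≤ ENNReal.ofReal ((2*B + 2*n*M + 3) * (2*M)^(n-1) * (2 * ε)) := by
        rw [haik]
        rw [show ((2*K+1).toNat : ℝ≥0∞) = ENNReal.ofReal ((2*K+1).toNat : ℝ) from
          (ENNReal.ofReal_natCast _).symm]
        have hP : (0:ℝ) ≤ (2*M)^(n-1) := by positivity
        rw [← ENNReal.ofReal_mul hP, ← ENNReal.ofReal_mul (Nat.cast_nonneg _)]
        apply ENNReal.ofReal_le_ofReal
        have hkr : (1:ℝ) ≤ (k:ℝ) := by exact_mod_cast hk1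
        have hkr0 : (0:ℝ) < (k:ℝ) := by linarith
        have htn : ((2*K+1).toNat : ℝ) = 2*(K:ℝ)+1 := by
          have h5 : (0:ℤ) ≤ 2*K+1 := by omega
          rw [show ((2*K+1).toNat : ℝ) = (((2*K+1).toNat : ℤ) : ℝ) by push_cast; ring,
            Int.toNat_of_nonneg h5]
          push_cast; ring
        have hcard : ((2*K+1).toNat : ℝ) ≤ (2*B + 2*(n:ℝ)*M + 3) * (k:ℝ) := by
          rw [htn]
          have hKle : (K:ℝ) < ε + (n:ℝ)*M*(k:ℝ) + 1 := Int.ceil_lt_add_one _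
          have h6 : 2*(K:ℝ)+1 ≤ 2*ε + 2*(n:ℝ)*M*(k:ℝ) + 3 := by linarith
          have h7 : 2*ε + 2*(n:ℝ)*M*(k:ℝ) + 3 ≤ (2*B + 2*(n:ℝ)*M + 3) * (k:ℝ) := by
            have h8 : 2*ε ≤ 2*B*(k:ℝ) := by nlinarith
            have h9 : (3:ℝ) ≤ 3*(k:ℝ) := by linarith
            nlinarith
          linarith
        calc ((2*K+1).toNat : ℝ) * ((2*M)^(n-1) * (2 * (ε / (k:ℝ))))
            ≤ ((2*B + 2*(n:ℝ)*M + 3) * (k:ℝ)) * ((2*M)^(n-1) * (2 * (ε / (k:ℝ)))) := by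
              apply mul_le_mul_of_nonneg_right hcard
              positivity
          _ = (2*B + 2*(n:ℝ)*M + 3) * (2*M)^(n-1) * (2 * ε) := by
              field_simp

lemma nat_pow_diff (m b : ℕ) : (b+2)^(m+1) ≤ b^(m+1) + 2*(m+1)*(b+2)^m := by
  induction m with
  | zero =>
    have h1 : (b+2)^(0+1) = b + 2 := pow_one _
    have h2 : b^(0+1) = b := pow_one _
    have h3 : (b+2)^0 = 1 := pow_zero _
    rw [h1, h2, h3]
  | succ m ih =>
    have hb : b^(m+1) ≤ (b+2)^(m+1) := Nat.pow_le_pow_left (by omega) _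
    calc (b+2)^(m+2) = (b+2)*(b+2)^(m+1) := by ring
      _ ≤ (b+2)*(b^(m+1) + 2*(m+1)*(b+2)^m) := Nat.mul_le_mul_left _ ih
      _ = b*b^(m+1) + 2*b^(m+1) + 2*(m+1)*((b+2)*(b+2)^m) := by ring
      _ = b^(m+2) + 2*b^(m+1) + 2*(m+1)*(b+2)^(m+1) := by ring
      _ ≤ b^(m+2) + 2*(b+2)^(m+1) + 2*(m+1)*(b+2)^(m+1) := by
          have := Nat.mul_le_mul_left 2 hb
          omega
      _ = b^(m+2) + 2*(m+2)*(b+2)^(m+1) := by ring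

lemma shell_card {n : ℕ} (hn : 1 ≤ n) (j : ℕ) (hj : 1 ≤ j)
    (t : Finset (Fin n → ℤ))
    (ht : ∀ a ∈ t, (Finset.univ.sup fun i => (a i).natAbs) = j) :
    t.card ≤ 2*n*(2*j+1)^(n-1) := by
  classical
  set T : ℕ → Finset (Fin n → ℤ) :=
    fun r => Fintype.piFinset fun _ => Finset.Icc (-(r:ℤ)) r with hT
  have hmemT : ∀ (r : ℕ) (a : Fin n → ℤ), a ∈ T r ↔ ∀ i, (a i).natAbs ≤ r := by
    intro r a
    rw [hT]
    simp only [Fintype.mem_piFinset, Finset.mem_Icc]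
    constructor
    · intro h i; have := h i; omega
    · intro h i; have := h i; omega
  have hcardT : ∀ r : ℕ, (T r).card = (2*r+1)^n := by
    intro r
    rw [hT]
    simp only [Fintype.card_piFinset]
    rw [Finset.prod_const, Finset.card_univ, Fintype.card_fin]
    congr 1
    rw [Int.card_Icc]
    omega
  have hne : (Finset.univ : Finset (Fin n)).Nonempty := by
    haveI : NeZero n := ⟨by omega⟩
    exact Finset.univ_nonempty
  have hsub : t ⊆ T j \ T (j-1) := by
    intro a hat
    rw [Finset.mem_sdiff]
    constructor
    · rw [hmemT]
      intro i
      have := Finset.le_sup (f := fun i => (a i).natAbs) (Finset.mem_univ i)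
      rw [ht a hat] at this
      exact this
    · rw [hmemT]
      push_neg
      obtain ⟨i, -, hik⟩ := Finset.exists_mem_eq_sup Finset.univ hne
        fun i => (a i).natAbs
      refine ⟨i, ?_⟩
      rw [ht a hat] at hik
      omega
  have hTT : T (j-1) ⊆ T j := by
    intro a
    rw [hmemT, hmemT]
    intro h i
    exact le_trans (h i) (by omega)
  have hcard : (T j \ T (j-1)).card = (2*j+1)^n - (2*(j-1)+1)^n := by
    rw [Finset.card_sdiff_of_subset hTT, hcardT, hcardT]
  have := Finset.card_le_card hsub
  rw [hcard] at this
  obtain ⟨m, rfl⟩ : ∃ m, n = m + 1 := ⟨n - 1, by omega⟩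
  have hb : 2*(j-1)+1 = 2*j - 1 := by omega
  have hkey := nat_pow_diff m (2*j-1)
  have h2 : 2*j - 1 + 2 = 2*j+1 := by omega
  rw [h2] at hkey
  have : t.card ≤ (2*j+1)^(m+1) - (2*j-1)^(m+1) := by
    rw [hb] at this; exact this
  simp only [Nat.add_sub_cancel]
  have hle : (2*j-1)^(m+1) ≤ (2*j+1)^(m+1) := Nat.pow_le_pow_left (by omega) _
  omega


/-- (Convergence case of the Khintchine–Groshev theorem.)
If `Σ k^{n−1} ψ(k) < ∞`, then the set of `x ∈ ℝ^n` admitting infinitely many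
`a ∈ ℤ^n \ {0}` with `|a₀ + a·x| < ψ(‖a‖)` for some `a₀ ∈ ℤ` is Lebesgue null. -/
theorem khintchine_groshev_convergence (n : ℕ) (hn : 1 ≤ n)
    (ψ : ℕ → ℝ) (hψ : ∀ k, 0 < ψ k)
    (hsum : Summable fun k : ℕ => (k : ℝ) ^ (n - 1) * ψ k) :
    MeasureTheory.volume
      {x : Fin n → ℝ |
        {a : Fin n → ℤ | a ≠ 0 ∧ ∃ a₀ : ℤ,
          |(a₀ : ℝ) + ∑ i, (a i : ℝ) * x i| <
            ψ (Finset.univ.sup fun i => (a i).natAbs)}.Infinite} = 0 := by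
  classical
  set W : Set (Fin n → ℝ) := {x | {a : Fin n → ℤ | a ≠ 0 ∧ ∃ a₀ : ℤ,
      |(a₀ : ℝ) + ∑ i, (a i : ℝ) * x i| <
        ψ (Finset.univ.sup fun i => (a i).natAbs)}.Infinite} with hWdef
  have hk1 : ∀ a : Fin n → ℤ, a ≠ 0 →
      1 ≤ Finset.univ.sup fun i => (a i).natAbs := by
    intro a ha
    rcases Function.ne_iff.mp ha with ⟨j, hj⟩
    have h1 : 1 ≤ (a j).natAbs := by
      simp only [Pi.zero_apply] at hj
      omega
    exact le_trans h1 (Finset.le_sup (f := fun i => (a i).natAbs) (Finset.mem_univ j))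
  set B : ℝ := ∑' k : ℕ, (k : ℝ) ^ (n-1) * ψ k with hBdef
  have hB0 : 0 ≤ B := tsum_nonneg fun j => mul_nonneg (by positivity) (hψ j).le
  have hBk : ∀ k : ℕ, 1 ≤ k → ψ k ≤ B := by
    intro k hk
    have h1 : (1:ℝ) ≤ (k:ℝ)^(n-1) := one_le_pow₀ (by exact_mod_cast hk)
    have h2 : ψ k ≤ (k:ℝ)^(n-1) * ψ k := by nlinarith [hψ k]
    exact le_trans h2 (Summable.le_tsum hsum k fun j _ => mul_nonneg (by positivity) (hψ j).le)
  -- null on each box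
  have hnull : ∀ M : ℕ, volume
      (W ∩ {x : Fin n → ℝ | ∀ j, x j ∈ Set.Icc (-((M:ℝ)+1)) ((M:ℝ)+1)}) = 0 := by
    intro M
    set M' : ℝ := (M:ℝ)+1 with hM'def
    have hM'1 : (1:ℝ) ≤ M' := by rw [hM'def]; linarith [(Nat.cast_nonneg M : (0:ℝ) ≤ (M:ℝ))]
    set D : ℝ := (2*B + 2*(n:ℝ)*M' + 3) * (2*M')^(n-1) with hDdef
    have hD0 : 0 ≤ D := by
      apply mul_nonneg
      · have : (0:ℝ) ≤ (n:ℝ) := Nat.cast_nonneg n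
        nlinarith
      · positivity
    set g : ℕ → ℝ≥0∞ := fun j => if j = 0 then 0
      else ENNReal.ofReal (D * (2 * ψ j)) with hgdef
    set s : (Fin n → ℤ) → Set (Fin n → ℝ) := fun a =>
      {x | (∀ j, x j ∈ Set.Icc (-M') M') ∧ a ≠ 0 ∧ ∃ a₀ : ℤ,
        |(a₀ : ℝ) + ∑ i, (a i : ℝ) * x i| <
          ψ (Finset.univ.sup fun i => (a i).natAbs)} with hsdef
    have hsa : ∀ a : Fin n → ℤ, volume (s a)
        ≤ g (Finset.univ.sup fun i => (a i).natAbs) := by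
      intro a
      by_cases ha : a = 0
      · subst ha
        have hempty : s 0 = ∅ := by
          ext x
          simp [hsdef]
        rw [hempty]
        simp
      · have hka := hk1 a ha
        have hga : g (Finset.univ.sup fun i => (a i).natAbs)
            = ENNReal.ofReal (D * (2 * ψ (Finset.univ.sup fun i => (a i).natAbs))) := by
          rw [hgdef]
          exact if_neg (by omega)
        rw [hga]
        have hsub : s a ⊆ {x : Fin n → ℝ | (∀ j, x j ∈ Set.Icc (-M') M') ∧ ∃ a₀ : ℤ,
            |(a₀ : ℝ) + ∑ i, (a i : ℝ) * x i| <
              ψ (Finset.univ.sup fun i => (a i).natAbs)} := by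
          intro x hx
          exact ⟨hx.1, hx.2.2⟩
        refine le_trans (measure_mono hsub) ?_
        have hcell := cell_measure hn a ha (ψ (Finset.univ.sup fun i => (a i).natAbs))
          M' B (hψ _) (hBk _ hka) hM'1
        refine le_trans hcell (le_of_eq ?_)
        rw [hDdef]
    -- total sum finite
    have htsum : ∑' a : Fin n → ℤ, volume (s a) ≠ ⊤ := by
      set c : ℝ := (2*(n:ℝ)*(3:ℝ)^(n-1)) * (D*2) with hcdef
      have hc0 : 0 ≤ c := by positivity
      set h : ℕ → ℝ := fun j => c * ((j:ℝ)^(n-1) * ψ j) with hhdef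
      have hhsummable : Summable h := hsum.mul_left c
      have hhnn : ∀ j, 0 ≤ h j := fun j =>
        mul_nonneg hc0 (mul_nonneg (by positivity) (hψ j).le)
      have hstep2 : ∑' a : Fin n → ℤ, g (Finset.univ.sup fun i => (a i).natAbs)
          ≤ ∑' j : ℕ, ENNReal.ofReal (h j) := by
        rw [ENNReal.tsum_eq_iSup_sum]
        apply iSup_le
        intro t
        rw [Finset.sum_comp g (fun a : Fin n → ℤ => Finset.univ.sup fun i => (a i).natAbs)]
        have hterm : ∀ j ∈ t.image (fun a : Fin n → ℤ =>
            Finset.univ.sup fun i => (a i).natAbs),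
            (t.filter fun a => (Finset.univ.sup fun i => (a i).natAbs) = j).card • g j
              ≤ ENNReal.ofReal (h j) := by
          intro j _
          by_cases hj0 : j = 0
          · subst hj0
            have : g 0 = 0 := by rw [hgdef]; exact if_pos rfl
            rw [this, smul_zero]
            exact zero_le
          · have hj1 : 1 ≤ j := by omega
            have hcard := shell_card hn j hj1
              (t.filter fun a => (Finset.univ.sup fun i => (a i).natAbs) = j)
              (fun a ha => (Finset.mem_filter.mp ha).2)
            rw [nsmul_eq_mul]
            have hgj : g j = ENNReal.ofReal (D * (2 * ψ j)) := by
              rw [hgdef]; exact if_neg hj0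
            rw [hgj]
            calc ((t.filter fun a => (Finset.univ.sup fun i => (a i).natAbs) = j).card
                  : ℝ≥0∞) * ENNReal.ofReal (D * (2 * ψ j))
                ≤ ((2*n*(2*j+1)^(n-1) : ℕ) : ℝ≥0∞) * ENNReal.ofReal (D * (2 * ψ j)) := by
                  exact mul_le_mul_left (by exact_mod_cast hcard) _
              _ = ENNReal.ofReal ((2*n*(2*j+1)^(n-1) : ℕ) * (D * (2 * ψ j))) := by
                  rw [← ENNReal.ofReal_natCast, ← ENNReal.ofReal_mul (Nat.cast_nonneg _)]
              _ ≤ ENNReal.ofReal (h j) := by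
                  apply ENNReal.ofReal_le_ofReal
                  have hN : ((2*n*(2*j+1)^(n-1) : ℕ) : ℝ)
                      ≤ 2*(n:ℝ)*(3:ℝ)^(n-1)*(j:ℝ)^(n-1) := by
                    push_cast
                    have h31 : ((2*j+1 : ℝ))^(n-1) ≤ ((3*j : ℝ))^(n-1) := by
                      apply pow_le_pow_left₀ (by positivity)
                      have : (1:ℝ) ≤ (j:ℝ) := by exact_mod_cast hj1
                      linarith
                    have h32 : ((3*j:ℝ))^(n-1) = (3:ℝ)^(n-1) * (j:ℝ)^(n-1) := mul_pow _ _ _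
                    rw [h32] at h31
                    have hn0 : (0:ℝ) ≤ (n:ℝ) := Nat.cast_nonneg n
                    nlinarith
                  have hD2ψ : (0:ℝ) ≤ D * (2 * ψ j) :=
                    mul_nonneg hD0 (by linarith [hψ j])
                  calc ((2*n*(2*j+1)^(n-1) : ℕ) : ℝ) * (D * (2 * ψ j))
                      ≤ (2*(n:ℝ)*(3:ℝ)^(n-1)*(j:ℝ)^(n-1)) * (D * (2 * ψ j)) :=
                        mul_le_mul_of_nonneg_right hN hD2ψ
                    _ = h j := by rw [hhdef, hcdef]; ring
        calc ∑ j ∈ t.image (fun a : Fin n → ℤ => Finset.univ.sup fun i => (a i).natAbs),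
              (t.filter fun a => (Finset.univ.sup fun i => (a i).natAbs) = j).card • g j
            ≤ ∑ j ∈ t.image (fun a : Fin n → ℤ => Finset.univ.sup fun i => (a i).natAbs),
              ENNReal.ofReal (h j) := Finset.sum_le_sum hterm
          _ ≤ ∑' j : ℕ, ENNReal.ofReal (h j) := ENNReal.sum_le_tsum _
      have hfin : ∑' j : ℕ, ENNReal.ofReal (h j) ≠ ⊤ := by
        rw [← ENNReal.ofReal_tsum_of_nonneg hhnn hhsummable]
        exact ENNReal.ofReal_ne_top
      exact ne_top_of_le_ne_top hfin
        (le_trans (ENNReal.tsum_le_tsum hsa) hstep2)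
    -- Borel-Cantelli
    have hlimsup := MeasureTheory.measure_limsup_cofinite_eq_zero
      (μ := (volume : MeasureTheory.Measure (Fin n → ℝ))) (s := s) htsum
    refine measure_mono_null ?_ hlimsup
    rintro x ⟨hxW, hxbox⟩
    rw [Filter.mem_limsup_iff_frequently_mem, Filter.frequently_cofinite_iff_infinite]
    apply Set.Infinite.mono _ hxW
    intro a ha
    exact ⟨hxbox, ha.1, ha.2⟩
  -- union over boxes
  have hcover : W ⊆ ⋃ M : ℕ,
      (W ∩ {x : Fin n → ℝ | ∀ j, x j ∈ Set.Icc (-((M:ℝ)+1)) ((M:ℝ)+1)}) := by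
    intro x hx
    refine Set.mem_iUnion.mpr ⟨⌈‖x‖⌉₊, hx, ?_⟩
    intro j
    have h1 : |x j| ≤ ‖x‖ := by
      have := norm_le_pi_norm x j
      simpa using this
    have h2 : ‖x‖ ≤ (⌈‖x‖⌉₊ : ℝ) := Nat.le_ceil _
    rw [Set.mem_Icc]
    constructor <;> [linarith [abs_le.mp (le_trans h1 h2) |>.1]; skip]
    · linarith [abs_le.mp (le_trans h1 h2) |>.2]
  exact measure_mono_null hcover (MeasureTheory.measure_iUnion_null hnull)
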